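/- arXiv:0810.5522 — 2 statements merged into one kernel-verified Lean document; each statement's English description precedes it below -/
import Mathlib

section
/- Let G be a finite simple graph with adjacency matrix A(G) over Z_2, and let G~ be the graph obtained from G by adding two new vertices u and v that are not adjacent to each other but have identical neighborhoods in G (i.e., both u and v are adjacent exactly to the vertices of some fixed subset of V(G)). Then for every subset s of V(G): corank A(G~(s)) = corank A(G(s)), and corank A(G~(s ∪ {u})) = corank A(G~(s ∪ {v})) = corank A(G~(s ∪ {u,v})) − 1, where G(s) denotes the induced subgraph on s and corank is taken over Z_2. -/
open Matrix LaurentPolynomial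
open scoped Classical

noncomputable section

def adjMatS {V : Type} (G : SimpleGraph V) (s : Finset V) : Matrix s s (ZMod 2) :=
  fun i j => if G.Adj i.1 j.1 then 1 else 0

def corankS {V : Type} (G : SimpleGraph V) (s : Finset V) : ℕ :=
  s.card - (adjMatS G s).rank

def adjMat {V : Type} [Fintype V] (G : SimpleGraph V) : Matrix V V (ZMod 2) :=
  fun i j => if G.Adj i j then 1 else 0

def corankM {m : Type} [Fintype m] (M : Matrix m m (ZMod 2)) : ℕ :=
  Fintype.card m - M.rank

def alphaCount {V : Type} [Fintype V] (σ : V → Bool) (s : Finset V) : ℕ :=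
  (s.filter (fun i => σ i = false)).card + ((sᶜ).filter (fun i => σ i = true)).card

def bracket {V : Type} [Fintype V] (G : SimpleGraph V) (σ : V → Bool) : LaurentPolynomial ℚ :=
  ∑ s : Finset V, T (2 * (alphaCount σ s : ℤ) - (Fintype.card V : ℤ)) *
    (-T 2 - T (-2)) ^ (corankS G s)

def lspan (p : LaurentPolynomial ℚ) : ℤ := (p.coeff.support.max.unbotD 0) - (p.coeff.support.min.untopD 0)

def Bmat {V : Type} [Fintype V] (G : SimpleGraph V) (x : V) : Matrix V V (ZMod 2) :=
  adjMat G + 1 + Matrix.single x x 1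

def writhe {V : Type} [Fintype V] (G : SimpleGraph V) (σ : V → Bool) : ℤ :=
  ∑ x, (-1 : ℤ) ^ (corankM (Bmat G x)) * (if σ x then 1 else -1)

def extAdj {V : Type} (G : SimpleGraph V) (N : Set V) : V ⊕ Bool → V ⊕ Bool → Prop
  | .inl i, .inl j => G.Adj i j
  | .inl i, .inr _ => i ∈ N
  | .inr _, .inl j => j ∈ N
  | .inr _, .inr _ => False

def ext2 {V : Type} (G : SimpleGraph V) (N : Set V) : SimpleGraph (V ⊕ Bool) where
  Adj := extAdj G N
  symm := by
    constructor
    rintro (i|b) (j|c) h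
    · exact G.adj_symm h
    · exact h
    · exact h
    · exact h
  loopless := by
    constructor
    rintro (i|b) h
    · exact G.irrefl h
    · exact h

def optExt {V : Type} (G : SimpleGraph V) : SimpleGraph (Option V) where
  Adj x y := match x, y with
    | some i, some j => G.Adj i j
    | _, _ => False
  symm := by
    constructor
    rintro (_|i) (_|j) h
    · exact h
    · exact h
    · exact h
    · exact G.adj_symm h
  loopless := by
    constructor
    rintro (_|i) h
    · exact h
    · exact G.irrefl h

section Aux

lemma rank_submatrix_of_surjective {R : Type*} [Field R] {m n : Type*} [Fintype m] [Fintype n]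
    (A : Matrix m m R) (f : n → m) (hf : Function.Surjective f) :
    (A.submatrix f f).rank = A.rank := by
  rw [Matrix.rank_eq_finrank_span_row, Matrix.rank_eq_finrank_span_row]
  have hrange : Set.range (A.submatrix f f).row =
      (LinearMap.funLeft R R f) '' (Set.range A.row) := by
    ext x
    constructor
    · rintro ⟨i, rfl⟩; exact ⟨A (f i), ⟨f i, rfl⟩, rfl⟩
    · rintro ⟨y, ⟨i, rfl⟩, rfl⟩
      obtain ⟨j, rfl⟩ := hf i
      exact ⟨j, rfl⟩
  rw [hrange, Submodule.span_image]
  exact (Submodule.equivMapOfInjective _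
    (LinearMap.funLeft_injective_of_surjective R R f hf) _).finrank_eq.symm

variable {V : Type} (G : SimpleGraph V) (N : Set V)

lemma ext2_adj_inl_inl (i j : V) : (ext2 G N).Adj (Sum.inl i) (Sum.inl j) ↔ G.Adj i j := Iff.rfl

lemma mem_image_inl_elim {s : Finset V} {x : V ⊕ Bool} (hx : x ∈ s.image Sum.inl) :
    ∃ a, x = Sum.inl a := by
  obtain ⟨a, -, rfl⟩ := Finset.mem_image.mp hx
  exact ⟨a, rfl⟩

lemma inr_not_mem_image_inl (b : Bool) (s : Finset V) :
    Sum.inr b ∉ s.image Sum.inl := by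
  intro h
  obtain ⟨a, ha⟩ := mem_image_inl_elim h
  exact Sum.inl_ne_inr ha.symm

end Aux

/-- Ω_g2 extension: coranks of induced subgraphs. -/
theorem corank_ext2 {V : Type} [Fintype V] (G : SimpleGraph V) (N : Set V)
    (s : Finset V) :
    corankS (ext2 G N) (s.image Sum.inl) = corankS G s ∧
    corankS (ext2 G N) (insert (Sum.inr true) (s.image Sum.inl)) =
      corankS (ext2 G N) (insert (Sum.inr false) (s.image Sum.inl)) ∧
    corankS (ext2 G N) (insert (Sum.inr true) (insert (Sum.inr false) (s.image Sum.inl))) =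
      corankS (ext2 G N) (insert (Sum.inr true) (s.image Sum.inl)) + 1 := by
  set E := ext2 G N with hE
  set s' : Finset (V ⊕ Bool) := s.image Sum.inl with hs'
  -- Part 1
  have part1 : corankS E s' = corankS G s := by
    have hbij : Function.Bijective
        (fun i : {x // x ∈ s} => (⟨Sum.inl i.1, Finset.mem_image_of_mem _ i.2⟩ : {x // x ∈ s'})) := by
      constructor
      · intro a b hab
        exact Subtype.ext (Sum.inl_injective (congrArg Subtype.val hab))
      · rintro ⟨x, hx⟩
        obtain ⟨a, ha, rfl⟩ := Finset.mem_image.mp hx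
        exact ⟨⟨a, ha⟩, rfl⟩
    let e : {x // x ∈ s} ≃ {x // x ∈ s'} := Equiv.ofBijective _ hbij
    have hmat : (adjMatS E s').submatrix e e = adjMatS G s := by
      ext i j
      rfl
    have hrank : (adjMatS E s').rank = (adjMatS G s).rank := by
      rw [← hmat, Matrix.rank_submatrix]
    have hcard : s'.card = s.card := Finset.card_image_of_injective s Sum.inl_injective
    simp [corankS, hrank, hcard]
  refine ⟨part1, ?_, ?_⟩
  · -- Part 2: swap true/false
    set sT := insert (Sum.inr true) s' with hsT
    set sF := insert (Sum.inr false) s' with hsF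
    let sw : V ⊕ Bool → V ⊕ Bool := Sum.map id not
    have hswmem : ∀ {b : Bool} {x : V ⊕ Bool}, x ∈ insert (Sum.inr b) s' →
        sw x ∈ insert (Sum.inr (!b)) s' := by
      intro b x hx
      rcases Finset.mem_insert.mp hx with h | h
      · subst h; exact Finset.mem_insert_self _ _
      · obtain ⟨a, rfl⟩ := mem_image_inl_elim h
        exact Finset.mem_insert_of_mem h
    have hswinv : ∀ x : V ⊕ Bool, sw (sw x) = x := by
      rintro (a | b)
      · rfl
      · simp [sw]
    let e : {x // x ∈ sT} ≃ {x // x ∈ sF} :=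
      { toFun := fun x => ⟨sw x.1, hswmem x.2⟩
        invFun := fun x => ⟨sw x.1, hswmem (b := false) x.2⟩
        left_inv := fun x => Subtype.ext (hswinv x.1)
        right_inv := fun x => Subtype.ext (hswinv x.1) }
    have hadj : ∀ x y : V ⊕ Bool, E.Adj (sw x) (sw y) ↔ E.Adj x y := by
      rintro (a | b) (a' | b') <;> exact Iff.rfl
    have hmat : (adjMatS E sF).submatrix e e = adjMatS E sT := by
      ext i j
      exact if_congr (hadj i.1 j.1) rfl rfl
    have hrank : (adjMatS E sF).rank = (adjMatS E sT).rank := by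
      rw [← hmat, Matrix.rank_submatrix]
    have hcard : sT.card = sF.card := by
      rw [hsT, hsF, Finset.card_insert_of_notMem (inr_not_mem_image_inl _ _),
        Finset.card_insert_of_notMem (inr_not_mem_image_inl _ _)]
    simp [corankS, hrank, hcard]
  · -- Part 3: duplicate vertex
    set sT := insert (Sum.inr true) s' with hsT
    set s2 := insert (Sum.inr true) (insert (Sum.inr false) s') with hs2
    have hFnotT : (Sum.inr false : V ⊕ Bool) ∉ sT := by
      intro h
      rcases Finset.mem_insert.mp h with h | h
      · exact Bool.false_ne_true (Sum.inr_injective h)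
      · exact inr_not_mem_image_inl false s h
    have hsub : sT ⊆ s2 := by
      rw [hsT, hs2]
      intro x hx
      rcases Finset.mem_insert.mp hx with h | h
      · subst h; exact Finset.mem_insert_self _ _
      · exact Finset.mem_insert_of_mem (Finset.mem_insert_of_mem h)
    have hcard : s2.card = sT.card + 1 := by
      rw [hs2, Finset.insert_comm, ← hsT, Finset.card_insert_of_notMem hFnotT]
    have hne : ∀ {y : V ⊕ Bool}, y ∈ sT → y ≠ Sum.inr false := by
      intro y hy h
      exact hFnotT (h ▸ hy)
    let f : {x // x ∈ s2} → {x // x ∈ sT} := fun x =>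
      if h : x.1 = Sum.inr false then ⟨Sum.inr true, Finset.mem_insert_self _ _⟩
      else ⟨x.1, by
        rcases Finset.mem_insert.mp x.2 with h1 | h1
        · rw [hsT]; exact h1 ▸ Finset.mem_insert_self _ _
        · rcases Finset.mem_insert.mp h1 with h2 | h2
          · exact absurd h2 h
          · exact Finset.mem_insert_of_mem h2⟩
    have hf : Function.Surjective f := by
      rintro ⟨y, hy⟩
      refine ⟨⟨y, hsub hy⟩, ?_⟩
      simp only [f, dif_neg (hne hy)]
    have hfval : ∀ x : {x // x ∈ s2}, (f x).1 = if x.1 = Sum.inr false then Sum.inr true else x.1 := by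
      intro x
      by_cases h : x.1 = Sum.inr false
      · simp [f, h]
      · simp [f, h]
    have hadj : ∀ x y : V ⊕ Bool, x ∈ s2 → y ∈ s2 →
        (E.Adj (if x = Sum.inr false then Sum.inr true else x)
               (if y = Sum.inr false then Sum.inr true else y) ↔ E.Adj x y) := by
      have hcases : ∀ z : V ⊕ Bool, z ∈ s2 →
          z = Sum.inr true ∨ z = Sum.inr false ∨ ∃ a, z = Sum.inl a := by
        intro z hz
        rcases Finset.mem_insert.mp hz with h | h
        · exact Or.inl h
        · rcases Finset.mem_insert.mp h with h | h
          · exact Or.inr (Or.inl h)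
          · exact Or.inr (Or.inr (mem_image_inl_elim h))
      intro x y hx hy
      rcases hcases x hx with rfl | rfl | ⟨a, rfl⟩ <;>
        rcases hcases y hy with rfl | rfl | ⟨b, rfl⟩ <;>
        simp [hE, ext2, extAdj]
    have hmat : adjMatS E s2 = (adjMatS E sT).submatrix f f := by
      ext i j
      show (if E.Adj i.1 j.1 then (1 : ZMod 2) else 0) = if E.Adj (f i).1 (f j).1 then 1 else 0
      rw [hfval i, hfval j]
      exact (if_congr (hadj i.1 j.1 i.2 j.2) rfl rfl).symm
    have hrank : (adjMatS E s2).rank = (adjMatS E sT).rank := by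
      rw [hmat]
      exact rank_submatrix_of_surjective _ f hf
    have hle : (adjMatS E sT).rank ≤ sT.card := by
      have := Matrix.rank_le_card_width (adjMatS E sT)
      simpa [Fintype.card_coe] using this
    simp only [corankS, ← hsT, ← hs2, hrank, hcard]
    omega
end
end

section
/- Let D be a chord diagram and G its intersection graph with adjacency matrix A(G) over Z_2. Then the number of connected components of the one-manifold m(D) obtained by surgery on the circle along all chords of D equals corank A(G) + 1. -/
open Matrix LaurentPolynomial
open scoped Classical

noncomputable section

/-- Two chords are linked iff their endpoints interleave on the circle
`ZMod (2n)` (endpoints compared via their values in {0, …, 2n-1}). -/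
def linked {n : ℕ} (f : Fin n → ZMod (2 * n) × ZMod (2 * n)) (i j : Fin n) : Prop :=
  ((f i).1.val < (f j).1.val ∧ (f j).1.val < (f i).2.val ∧ (f i).2.val < (f j).2.val) ∨
  ((f j).1.val < (f i).1.val ∧ (f i).1.val < (f j).2.val ∧ (f j).2.val < (f i).2.val)

namespace CDAux

/-- char 2 helpers -/
lemma z2a (a b c d : ZMod 2) (h : a + b = c + d) : b + c = d + a := by revert a b c d; decide
lemma z2b (a b : ZMod 2) (h : a + b = 0) : a = b := by revert a b; decide
lemma z2c (a b c : ZMod 2) (h : a + b = c) : a = b + c := by revert a b c; decide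
lemma z2d (a b c : ZMod 2) : (a + c) + (b + c) = a + b := by revert a b c; decide
lemma z2g (a b c d : ZMod 2) (h : a + b = c + d) : a + c = b + d := by revert a b c d; decide

lemma val_sub_one {m : ℕ} [NeZero m] (r : ZMod m) :
    (r - 1).val = if r.val = 0 then m - 1 else r.val - 1 := by
  have hm : 0 < m := Nat.pos_of_ne_zero (NeZero.ne m)
  have hrm : r.val < m := ZMod.val_lt r
  have hcast : ∀ a : ZMod m, ((a.val : ℕ) : ZMod m) = a := fun a => ZMod.natCast_rightInverse a
  by_cases h : r.val = 0
  · have hr : r = 0 := by rw [← hcast r, h]; simp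
    have h1 : ((m - 1 : ℕ) : ZMod m) = r - 1 := by
      rw [hr]
      have : ((m - 1 : ℕ) : ZMod m) + 1 = 0 := by
        have : ((m - 1 : ℕ) : ZMod m) + 1 = (((m - 1) + 1 : ℕ) : ZMod m) := by push_cast; ring
        rw [this]; have : (m - 1) + 1 = m := by omega
        rw [this, ZMod.natCast_self]
      linear_combination this
    rw [← h1, ZMod.val_natCast, Nat.mod_eq_of_lt (by omega), if_pos h]
  · have h1 : ((r.val - 1 : ℕ) : ZMod m) = r - 1 := by
      have h2 : ((r.val - 1 : ℕ) : ZMod m) + 1 = r := by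
        have : ((r.val - 1 : ℕ) : ZMod m) + 1 = (((r.val - 1) + 1 : ℕ) : ZMod m) := by push_cast; ring
        rw [this]; have : (r.val - 1) + 1 = r.val := by omega
        rw [this, hcast]
      linear_combination h2
    rw [← h1, ZMod.val_natCast, Nat.mod_eq_of_lt (by omega), if_neg h]

lemma const_of_step {m : ℕ} [NeZero m] {K : Type} (g : ZMod m → K)
    (h : ∀ q, g q = g (q - 1)) : ∀ q, g q = g 0 := by
  have key : ∀ k : ℕ, g (k : ZMod m) = g 0 := by
    intro k; induction k with
    | zero => simp
    | succ k ih =>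
      have h2 := h ((k + 1 : ℕ) : ZMod m)
      have h3 : ((k + 1 : ℕ) : ZMod m) - 1 = ((k : ℕ) : ZMod m) := by push_cast; ring
      rw [h2, h3, ih]
  intro q
  have := key q.val
  rwa [show ((q.val : ℕ) : ZMod m) = q from ZMod.natCast_rightInverse q] at this

lemma even_mem_span {n : ℕ} (S : Submodule (ZMod 2) (Fin n → ZMod 2)) (i0 : Fin n)
    (hS : ∀ i j : Fin n,
      (fun k => (if k = i then (1 : ZMod 2) else 0) + (if k = j then 1 else 0)) ∈ S)
    (y : Fin n → ZMod 2) (hy : ∑ i, y i = 0) : y ∈ S := by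
  classical
  set T := Finset.univ.filter (fun i => y i = 1) with hT
  have hval : ∀ a : ZMod 2, a = 0 ∨ a = 1 := by decide
  have hy' : y = ∑ i ∈ T, (fun k => if k = i then (1 : ZMod 2) else 0) := by
    funext k
    rw [Finset.sum_apply]
    rw [Finset.sum_ite_eq T k (fun _ => (1 : ZMod 2))]
    rcases hval (y k) with h | h
    · rw [h]; simp [hT, h]
    · rw [h]; simp [hT, h]
  have hcard : (T.card : ZMod 2) = 0 := by
    have : ∑ i, y i = (T.card : ZMod 2) := by
      rw [show ∑ i, y i = ∑ i ∈ T, y i + ∑ i ∈ Tᶜ, y i from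
        (Finset.sum_add_sum_compl T y).symm]
      have h1 : ∑ i ∈ T, y i = T.card • (1 : ZMod 2) := by
        apply Finset.sum_eq_card_nsmul; intro a ha; simp [hT] at ha; exact ha
      have h2 : ∑ i ∈ Tᶜ, y i = 0 := by
        apply Finset.sum_eq_zero; intro a ha
        simp [hT] at ha
        rcases hval (y a) with h | h
        · exact h
        · exact absurd h ha
      rw [h1, h2, add_zero, nsmul_eq_mul, mul_one]
    rw [← this, hy]
  have hfin : y = ∑ i ∈ T,
      (fun k => (if k = i then (1 : ZMod 2) else 0) + (if k = i0 then 1 else 0)) := by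
    funext k
    rw [Finset.sum_apply]
    have : ∀ i ∈ T, ((if k = i then (1 : ZMod 2) else 0) + (if k = i0 then 1 else 0))
        = (fun i => (if k = i then (1 : ZMod 2) else 0) + (if k = i0 then 1 else 0)) i :=
      fun _ _ => rfl
    rw [Finset.sum_add_distrib, Finset.sum_ite_eq T k (fun _ => (1 : ZMod 2)),
      Finset.sum_const, ← Nat.cast_smul_eq_nsmul (ZMod 2), hcard, zero_smul, add_zero]
    have := congrFun hy' k
    rw [Finset.sum_apply, Finset.sum_ite_eq T k (fun _ => (1 : ZMod 2))] at this
    exact this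
  rw [hfin]
  exact Submodule.sum_mem S (fun i _ => hS i i0)

end CDAux

namespace CDAux

section Diagram

variable {n : ℕ} [NeZero (2 * n)]
variable (f : Fin n → ZMod (2 * n) × ZMod (2 * n)) (τ : ZMod (2 * n) → ZMod (2 * n))
variable (ch : ZMod (2 * n) → Fin n)

def NN : Matrix (ZMod (2 * n)) (ZMod (2 * n)) (ZMod 2) :=
  Matrix.of fun r q => (if q + 1 = r then (1 : ZMod 2) else 0) + (if τ q = r then 1 else 0)

def Phi : (ZMod (2 * n) → ZMod 2) →ₗ[ZMod 2] (ZMod (2 * n) → ZMod 2) := (NN τ).mulVecLin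

def psi : (ZMod (2 * n) → ZMod 2) →ₗ[ZMod 2] (Fin n → ZMod 2) where
  toFun x i := x (f i).1 + x (f i).2
  map_add' x z := by funext i; simp only [Pi.add_apply]; ring
  map_smul' c x := by funext i; simp only [Pi.smul_apply, smul_eq_mul, RingHom.id_apply]; ring

def beta : (Fin n → ZMod 2) →ₗ[ZMod 2] (ZMod (2 * n) → ZMod 2) where
  toFun y r := y (ch r)
  map_add' x z := rfl
  map_smul' c x := rfl

def chi (j : Fin n) (q : ZMod (2 * n)) : ZMod 2 :=
  if (f j).1.val ≤ q.val ∧ q.val < (f j).2.val then 1 else 0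

def AI : Matrix (Fin n) (Fin n) (ZMod 2) :=
  Matrix.of fun i j => if linked f i j then (1 : ZMod 2) else 0

lemma Phi_apply (hτinv : Function.Involutive τ) (t : ZMod (2 * n) → ZMod 2) (r : ZMod (2 * n)) :
    Phi τ t r = t (r - 1) + t (τ r) := by
  have h0 : Phi τ t r = ∑ q, ((if q + 1 = r then (1 : ZMod 2) else 0)
      + (if τ q = r then 1 else 0)) * t q := rfl
  rw [h0]
  have h1 : ∀ q : ZMod (2 * n), ((if q + 1 = r then (1 : ZMod 2) else 0)
      + (if τ q = r then 1 else 0)) * t q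
      = (if q = r - 1 then t q else 0) + (if q = τ r then t q else 0) := by
    intro q
    have e1 : (q + 1 = r) ↔ (q = r - 1) :=
      ⟨fun h => by rw [← h]; ring, fun h => by rw [h]; ring⟩
    have e2 : (τ q = r) ↔ (q = τ r) := by
      constructor
      · intro h; rw [← h, hτinv q]
      · intro h; rw [h, hτinv r]
    rw [if_congr e1 rfl rfl, if_congr e2 rfl rfl]
    split_ifs <;> ring
  rw [Finset.sum_congr rfl (fun q _ => h1 q), Finset.sum_add_distrib,
    Finset.sum_ite_eq' Finset.univ (r - 1) t, Finset.sum_ite_eq' Finset.univ (τ r) t]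
  simp

section WithHyps

variable (hlt : ∀ i, (f i).1.val < (f i).2.val)
variable (hinj : Function.Injective (fun p : Fin n × Bool => cond p.2 (f p.1).2 (f p.1).1))
variable (hτinv : Function.Involutive τ) (hτ : ∀ i, τ (f i).1 = (f i).2)
variable (hch1 : ∀ i, ch ((f i).1) = i) (hch2 : ∀ i, ch ((f i).2) = i)
variable (hpt : ∀ r, r = (f (ch r)).1 ∨ r = (f (ch r)).2)

include hτinv hτ in
lemma tauD : ∀ i, τ (f i).2 = (f i).1 := by
  intro i; rw [← hτ i]; exact hτinv ((f i).1)

include hτinv hτ hpt in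
lemma cases_pt : ∀ r, (r = (f (ch r)).1 ∧ τ r = (f (ch r)).2)
    ∨ (r = (f (ch r)).2 ∧ τ r = (f (ch r)).1) := by
  intro r
  rcases hpt r with h | h
  · exact Or.inl ⟨h, by conv_lhs => rw [h, hτ]⟩
  · exact Or.inr ⟨h, by conv_lhs => rw [h, tauD f τ hτinv hτ]⟩

include hτinv hτ hch1 hch2 hpt in
lemma ch_tau : ∀ r, ch (τ r) = ch r := by
  intro r
  rcases cases_pt f τ ch hτinv hτ hpt r with ⟨_, h2⟩ | ⟨_, h2⟩
  · rw [h2, hch2]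
  · rw [h2, hch1]

lemma chi_sub : ∀ j r, chi f j (r - 1)
    = if (f j).1.val < r.val ∧ r.val ≤ (f j).2.val then 1 else 0 := by
  intro j r
  have hb : (f j).2.val < 2 * n := ZMod.val_lt _
  have ha : (f j).1.val < 2 * n := ZMod.val_lt _
  have hr : r.val < 2 * n := ZMod.val_lt r
  unfold chi
  rw [val_sub_one]
  split_ifs <;> first | rfl | omega

include hlt in
lemma chi_step : ∀ j q, chi f j q + chi f j (q - 1)
    = (if q = (f j).1 then (1 : ZMod 2) else 0) + (if q = (f j).2 then 1 else 0) := by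
  intro j q
  have hab := hlt j
  have h1 : (q = (f j).1) ↔ (q.val = (f j).1.val) :=
    ⟨fun h => by rw [h], fun h => ZMod.val_injective _ h⟩
  have h2 : (q = (f j).2) ↔ (q.val = (f j).2.val) :=
    ⟨fun h => by rw [h], fun h => ZMod.val_injective _ h⟩
  rw [chi_sub, if_congr h1 rfl rfl, if_congr h2 rfl rfl]
  unfold chi
  split_ifs <;> first | rfl | (exfalso; omega)

include hinj in
lemma pt_inj : ∀ (p q : Fin n × Bool),
    (cond p.2 (f p.1).2 (f p.1).1) = (cond q.2 (f q.1).2 (f q.1).1) → p = q := by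
  intro p q h; exact hinj h

include hlt hinj hτinv hτ hpt in
lemma chi_link : ∀ j r, chi f j (r - 1) + chi f j (τ r)
    = if linked f (ch r) j then (1 : ZMod 2) else 0 := by
  intro j r
  have hltr := hlt (ch r)
  have hltj := hlt j
  rcases cases_pt f τ ch hτinv hτ hpt r with ⟨h1, h2⟩ | ⟨h1, h2⟩ <;>
    [have hrv : r.val = (f (ch r)).1.val := congrArg ZMod.val h1;
     have hrv : r.val = (f (ch r)).2.val := congrArg ZMod.val h1] <;>
  · rw [chi_sub, h2, hrv]
    unfold chi linked
    by_cases hij : ch r = j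
    · rw [hij]
      split_ifs <;> first | rfl | (exfalso; omega)
    · have d1 : (f (ch r)).1.val ≠ (f j).1.val := by
        intro h
        exact hij (congrArg Prod.fst
          (pt_inj f hinj (ch r, false) (j, false) (ZMod.val_injective _ h)))
      have d2 : (f (ch r)).1.val ≠ (f j).2.val := by
        intro h
        have := pt_inj f hinj (ch r, false) (j, true) (ZMod.val_injective _ h)
        simpa using congrArg Prod.snd this
      have d3 : (f (ch r)).2.val ≠ (f j).1.val := by
        intro h
        have := pt_inj f hinj (ch r, true) (j, false) (ZMod.val_injective _ h)
        simpa using congrArg Prod.snd this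
      have d4 : (f (ch r)).2.val ≠ (f j).2.val := by
        intro h
        exact hij (congrArg Prod.fst
          (pt_inj f hinj (ch r, true) (j, true) (ZMod.val_injective _ h)))
      split_ifs <;> first | rfl | (exfalso; omega)

include hlt hinj hpt in
lemma endpoint_ind : ∀ (p : ZMod (2 * n)) (i : Fin n),
    (if p = (f i).1 then (1 : ZMod 2) else 0) + (if p = (f i).2 then 1 else 0)
    = if i = ch p then 1 else 0 := by
  intro p i
  have hne : (f (ch p)).1 ≠ (f (ch p)).2 := by
    intro h; have := congrArg ZMod.val h; have := hlt (ch p); omega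
  rcases hpt p with h | h
  · by_cases hip : i = ch p
    · subst hip
      rw [if_pos h, if_neg (fun hc => hne (h.symm.trans hc)), if_pos rfl]
      decide
    · rw [if_neg, if_neg, if_neg hip]
      · decide
      · intro hc
        have := pt_inj f hinj (i, true) (ch p, false) (hc.symm.trans h)
        simpa using congrArg Prod.snd this
      · intro hc
        exact hip (congrArg Prod.fst
          (pt_inj f hinj (i, false) (ch p, false) (hc.symm.trans h)))
  · by_cases hip : i = ch p
    · subst hip
      rw [if_neg (fun hc => hne (hc.symm.trans h)), if_pos h, if_pos rfl]
      decide
    · rw [if_neg, if_neg, if_neg hip]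
      · decide
      · intro hc
        exact hip (congrArg Prod.fst
          (pt_inj f hinj (i, true) (ch p, true) (hc.symm.trans h)))
      · intro hc
        have := pt_inj f hinj (i, false) (ch p, true) (hc.symm.trans h)
        simpa using congrArg Prod.snd this

include hτinv in
lemma ker_finrank :
    Module.finrank (ZMod 2) (LinearMap.ker (Phi τ))
      = Nat.card (Quot fun p q : ZMod (2 * n) => τ (p + 1) = q) := by
  classical
  set rel := fun p q : ZMod (2 * n) => τ (p + 1) = q with hrel
  haveI : Finite (Quot rel) := Quot.finite rel
  haveI : Fintype (Quot rel) := Fintype.ofFinite _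
  have hmem : ∀ F : Quot rel → ZMod 2,
      (fun r => F (Quot.mk rel r)) ∈ LinearMap.ker (Phi τ) := by
    intro F
    rw [LinearMap.mem_ker]
    funext r
    rw [show ((0 : ZMod (2 * n) → ZMod 2) r) = 0 from rfl, Phi_apply τ hτinv]
    have hq : Quot.mk rel (r - 1) = Quot.mk rel (τ r) :=
      Quot.sound (show τ ((r - 1) + 1) = τ r by rw [sub_add_cancel])
    show F (Quot.mk rel (r - 1)) + F (Quot.mk rel (τ r)) = 0
    rw [hq]
    exact CharTwo.add_self_eq_zero _
  have hsound : ∀ x : LinearMap.ker (Phi τ), ∀ p q : ZMod (2 * n),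
      rel p q → x.1 p = x.1 q := by
    intro x p q hpq
    have hx := x.2
    rw [LinearMap.mem_ker] at hx
    have h2 := congrFun hx (p + 1)
    rw [show ((0 : ZMod (2 * n) → ZMod 2) (p + 1)) = 0 from rfl,
      Phi_apply τ hτinv, add_sub_cancel_right, hpq] at h2
    exact z2b _ _ h2
  have hequiv : (Quot rel → ZMod 2) ≃ₗ[ZMod 2] LinearMap.ker (Phi τ) :=
    { toFun := fun F => ⟨fun r => F (Quot.mk rel r), hmem F⟩
      map_add' := fun F G => rfl
      map_smul' := fun c F => rfl
      invFun := fun x => Quot.lift (fun r => x.1 r) (hsound x)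
      left_inv := by
        intro F; funext z; induction z using Quot.ind; rfl
      right_inv := fun x => Subtype.ext rfl }
  rw [← LinearEquiv.finrank_eq hequiv, Module.finrank_fintype_fun_eq_card,
    Nat.card_eq_fintype_card]

include hch1 hch2 hpt in
lemma ker_psi_eq : LinearMap.ker (psi f) = LinearMap.range (beta ch) := by
  ext x
  simp only [LinearMap.mem_ker, LinearMap.mem_range]
  constructor
  · intro hx
    have hx' : ∀ i, x (f i).1 + x (f i).2 = 0 := by
      intro i
      have := congrFun hx i
      exact this
    refine ⟨fun i => x (f i).1, ?_⟩
    funext r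
    show x (f (ch r)).1 = x r
    rcases hpt r with h | h
    · rw [← h]
    · have h2 := hx' (ch r)
      rw [← h] at h2
      exact z2b _ _ h2
  · rintro ⟨y, rfl⟩
    funext i
    show y (ch (f i).1) + y (ch (f i).2) = 0
    rw [hch1, hch2]
    exact CharTwo.add_self_eq_zero _

include hch1 in
lemma beta_inj : Function.Injective (beta ch) := by
  intro y z h
  funext i
  have h2 : y (ch (f i).1) = z (ch (f i).1) := congrFun h (f i).1
  rwa [hch1] at h2

include hlt hinj hpt in
lemma psi_single : ∀ p, psi f (fun q => if q = p then (1 : ZMod 2) else 0)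
    = fun i => if i = ch p then 1 else 0 := by
  intro p; funext i
  show (if (f i).1 = p then (1 : ZMod 2) else 0) + (if (f i).2 = p then 1 else 0) = _
  rw [if_congr (eq_comm (a := (f i).1) (b := p)) rfl rfl,
    if_congr (eq_comm (a := (f i).2) (b := p)) rfl rfl]
  exact endpoint_ind f ch hlt hinj hpt p i

include hτinv in
lemma Phi_single : ∀ p, Phi τ (fun q => if q = p then (1 : ZMod 2) else 0)
    = fun r => (if r = p + 1 then (1 : ZMod 2) else 0) + (if r = τ p then 1 else 0) := by
  intro p; funext r
  rw [Phi_apply τ hτinv]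
  congr 1
  · exact if_congr ⟨fun h => by rw [← h]; ring, fun h => by rw [h]; ring⟩ rfl rfl
  · exact if_congr ⟨fun h => by rw [← h, hτinv], fun h => by rw [h, hτinv]⟩ rfl rfl

include hinj in
lemma sum_part : ∀ F : ZMod (2 * n) → ZMod 2,
    ∑ r, F r = ∑ i, (F (f i).1 + F (f i).2) := by
  intro F
  have hgb : Function.Bijective (fun p : Fin n × Bool => cond p.2 (f p.1).2 (f p.1).1) := by
    rw [Fintype.bijective_iff_injective_and_card]
    refine ⟨hinj, ?_⟩
    simp only [Fintype.card_prod, Fintype.card_fin, Fintype.card_bool, ZMod.card]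
    ring
  set e := Equiv.ofBijective _ hgb with he
  rw [← Equiv.sum_comp e F, Fintype.sum_prod_type]
  apply Finset.sum_congr rfl
  intro i _
  rw [Fintype.sum_bool]
  exact add_comm _ _

def sumF : (Fin n → ZMod 2) →ₗ[ZMod 2] ZMod 2 where
  toFun y := ∑ i, y i
  map_add' y z := by simp [Finset.sum_add_distrib]
  map_smul' c y := by simp [Finset.mul_sum]

lemma sumF_ker_finrank (hn : 0 < n) :
    Module.finrank (ZMod 2) (LinearMap.ker (sumF (n := n))) = n - 1 := by
  have h1 := LinearMap.finrank_range_add_finrank_ker (sumF (n := n))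
  rw [Module.finrank_fintype_fun_eq_card, Fintype.card_fin] at h1
  have hsurj : LinearMap.range (sumF (n := n)) = ⊤ := by
    rw [LinearMap.range_eq_top]
    intro c
    refine ⟨fun k => if k = ⟨0, hn⟩ then c else 0, ?_⟩
    show ∑ i, (if i = (⟨0, hn⟩ : Fin n) then c else 0) = c
    rw [Finset.sum_ite_eq' Finset.univ (⟨0, hn⟩ : Fin n) (fun _ => c)]
    simp
  rw [hsurj, finrank_top, Module.finrank_self] at h1
  omega

include hlt hinj hτinv hτ hch1 hch2 hpt in
lemma map_psi_range (hn : 0 < n) :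
    Submodule.map (psi f) (LinearMap.range (Phi τ)) = LinearMap.ker (sumF (n := n)) := by
  apply le_antisymm
  · rintro x ⟨w, ⟨t, rfl⟩, rfl⟩
    show sumF (psi f (Phi τ t)) = 0
    show ∑ i, ((Phi τ t) (f i).1 + (Phi τ t) (f i).2) = 0
    rw [← sum_part f hinj (Phi τ t)]
    rw [Finset.sum_congr rfl (fun r _ => Phi_apply τ hτinv t r), Finset.sum_add_distrib]
    have e1 : ∑ r, t (r - 1) = ∑ r, t r :=
      Fintype.sum_equiv (Equiv.subRight (1 : ZMod (2 * n))) _ _ (fun r => rfl)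
    have e2 : ∑ r, t (τ r) = ∑ r, t r :=
      Fintype.sum_equiv ⟨τ, τ, hτinv.leftInverse, hτinv.rightInverse⟩ _ _ (fun r => rfl)
    rw [e1, e2]
    exact CharTwo.add_self_eq_zero _
  · intro y hy
    have hy' : ∑ i, y i = 0 := hy
    apply even_mem_span _ ⟨0, hn⟩ _ y hy'
    have hpair : ∀ p : ZMod (2 * n),
        (fun k => (if k = ch (p + 1) then (1 : ZMod 2) else 0) + (if k = ch p then 1 else 0))
          ∈ Submodule.map (psi f) (LinearMap.range (Phi τ)) := by
      intro p
      refine ⟨Phi τ (fun q => if q = p then 1 else 0), ⟨_, rfl⟩, ?_⟩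
      rw [Phi_single τ hτinv p]
      have hsplit : (fun r => (if r = p + 1 then (1 : ZMod 2) else 0) + (if r = τ p then 1 else 0))
          = (fun r => if r = p + 1 then (1 : ZMod 2) else 0)
            + (fun r => if r = τ p then 1 else 0) := rfl
      rw [hsplit, map_add, psi_single f ch hlt hinj hpt, psi_single f ch hlt hinj hpt,
        ch_tau f τ ch hτinv hτ hch1 hch2 hpt]
      rfl
    have htel : ∀ k : ℕ,
        (fun kk => (if kk = ch ((k : ZMod (2 * n))) then (1 : ZMod 2) else 0)
          + (if kk = ch 0 then 1 else 0))
          ∈ Submodule.map (psi f) (LinearMap.range (Phi τ)) := by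
      intro k
      induction k with
      | zero =>
        have h0 : (fun kk => (if kk = ch ((0 : ℕ) : ZMod (2 * n)) then (1 : ZMod 2) else 0)
            + (if kk = ch 0 then 1 else 0)) = (0 : Fin n → ZMod 2) := by
          funext kk
          rw [Nat.cast_zero]
          exact CharTwo.add_self_eq_zero _
        rw [h0]; exact zero_mem _
      | succ k ih =>
        have h1 := hpair ((k : ℕ) : ZMod (2 * n))
        have h2 := add_mem h1 ih
        have h3 : (fun kk => (if kk = ch (((k : ℕ) : ZMod (2 * n)) + 1) then (1 : ZMod 2) else 0)
              + (if kk = ch ((k : ℕ) : ZMod (2 * n)) then 1 else 0))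
            + (fun kk => (if kk = ch ((k : ℕ) : ZMod (2 * n)) then (1 : ZMod 2) else 0)
              + (if kk = ch 0 then 1 else 0))
            = fun kk => (if kk = ch (((k + 1 : ℕ) : ZMod (2 * n))) then (1 : ZMod 2) else 0)
              + (if kk = ch 0 then 1 else 0) := by
          funext kk
          rw [show (((k + 1 : ℕ) : ZMod (2 * n))) = ((k : ℕ) : ZMod (2 * n)) + 1 by push_cast; ring]
          show ((if kk = ch (((k : ℕ) : ZMod (2 * n)) + 1) then (1 : ZMod 2) else 0)
              + (if kk = ch ((k : ℕ) : ZMod (2 * n)) then 1 else 0))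
            + ((if kk = ch ((k : ℕ) : ZMod (2 * n)) then (1 : ZMod 2) else 0)
              + (if kk = ch 0 then 1 else 0)) = _
          generalize (if kk = ch (((k : ℕ) : ZMod (2 * n)) + 1) then (1 : ZMod 2) else 0) = a
          generalize (if kk = ch ((k : ℕ) : ZMod (2 * n)) then (1 : ZMod 2) else 0) = b
          generalize (if kk = ch 0 then (1 : ZMod 2) else 0) = c
          revert a b c; decide
        rw [← h3]
        exact h2
    have hone : ∀ i : Fin n,
        (fun kk => (if kk = i then (1 : ZMod 2) else 0) + (if kk = ch 0 then 1 else 0))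
          ∈ Submodule.map (psi f) (LinearMap.range (Phi τ)) := by
      intro i
      have h1 := htel ((f i).1).val
      rwa [show (((f i).1.val : ℕ) : ZMod (2 * n)) = (f i).1 from ZMod.natCast_rightInverse _,
        hch1] at h1
    intro i j
    have h2 := add_mem (hone i) (hone j)
    have h3 : (fun kk => (if kk = i then (1 : ZMod 2) else 0) + (if kk = ch 0 then 1 else 0))
          + (fun kk => (if kk = j then (1 : ZMod 2) else 0) + (if kk = ch 0 then 1 else 0))
        = fun kk => (if kk = i then (1 : ZMod 2) else 0) + (if kk = j then 1 else 0) := by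
      funext kk
      show ((if kk = i then (1 : ZMod 2) else 0) + (if kk = ch 0 then 1 else 0))
          + ((if kk = j then (1 : ZMod 2) else 0) + (if kk = ch 0 then 1 else 0)) = _
      generalize (if kk = i then (1 : ZMod 2) else 0) = a
      generalize (if kk = j then (1 : ZMod 2) else 0) = b
      generalize (if kk = ch 0 then (1 : ZMod 2) else 0) = c
      revert a b c; decide
    rw [← h3]
    exact h2

include hlt hinj hτinv hτ hpt in
lemma key_identity : ∀ δ : Fin n → ZMod 2,
    Phi τ (fun q => ∑ j, δ j * chi f j q) = beta ch ((AI f).mulVec δ) := by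
  intro δ
  funext r
  rw [Phi_apply τ hτinv]
  show (∑ j, δ j * chi f j (r - 1)) + (∑ j, δ j * chi f j (τ r)) = ((AI f).mulVec δ) (ch r)
  rw [← Finset.sum_add_distrib]
  rw [Finset.sum_congr rfl (fun j _ => by
    rw [← mul_add, chi_link f τ ch hlt hinj hτinv hτ hpt j r])]
  show _ = ∑ j, (AI f) (ch r) j * δ j
  apply Finset.sum_congr rfl
  intro j _
  rw [mul_comm]
  rfl

include hlt hinj hτinv hτ hch1 hch2 hpt in
lemma range_inf_beta :
    LinearMap.range (Phi τ) ⊓ LinearMap.range (beta ch)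
      = Submodule.map (beta ch) (LinearMap.range (AI f).mulVecLin) := by
  apply le_antisymm
  · rintro x ⟨⟨t, ht⟩, y, hy⟩
    have hdtau : ∀ r, (t (τ r) + t (τ r - 1)) = (t r + t (r - 1)) := by
      intro r
      have e1 : t (r - 1) + t (τ r) = x r := by rw [← ht]; exact (Phi_apply τ hτinv t r).symm
      have e2 : t (τ r - 1) + t (τ (τ r)) = x (τ r) := by
        rw [← ht]; exact (Phi_apply τ hτinv t (τ r)).symm
      rw [hτinv r] at e2
      have e3 : x r = x (τ r) := by
        rw [← hy]
        show y (ch r) = y (ch (τ r))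
        rw [ch_tau f τ ch hτinv hτ hch1 hch2 hpt]
      have e4 : t (r - 1) + t (τ r) = t (τ r - 1) + t r := by rw [e1, e3, ← e2]
      exact z2a _ _ _ _ e4
    have hdch : ∀ r, t r + t (r - 1) = (fun j => t (f j).1 + t ((f j).1 - 1)) (ch r) := by
      intro r
      rcases cases_pt f τ ch hτinv hτ hpt r with ⟨h1, h2⟩ | ⟨h1, h2⟩
      · show t r + t (r - 1) = t (f (ch r)).1 + t ((f (ch r)).1 - 1)
        conv_lhs => rw [h1]
      · show t r + t (r - 1) = t (f (ch r)).1 + t ((f (ch r)).1 - 1)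
        rw [← h2]
        exact (hdtau r).symm
    set δ : Fin n → ZMod 2 := fun j => t (f j).1 + t ((f j).1 - 1) with hδ
    set t' : ZMod (2 * n) → ZMod 2 := fun q => ∑ j, δ j * chi f j q with ht'
    have hstep : ∀ q, (fun q => t q + t' q) q = (fun q => t q + t' q) (q - 1) := by
      intro q
      show t q + t' q = t (q - 1) + t' (q - 1)
      have h1 : t' q + t' (q - 1) = δ (ch q) := by
        show (∑ j, δ j * chi f j q) + (∑ j, δ j * chi f j (q - 1)) = δ (ch q)
        rw [← Finset.sum_add_distrib]
        rw [Finset.sum_congr rfl (fun j _ => by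
          rw [← mul_add, chi_step f hlt j q, endpoint_ind f ch hlt hinj hpt q j])]
        rw [Finset.sum_congr rfl (fun j _ => by rw [mul_ite, mul_one, mul_zero])]
        rw [Finset.sum_ite_eq' Finset.univ (ch q) δ]
        simp
      have h2 : t q + t (q - 1) = δ (ch q) := hdch q
      exact z2g _ _ _ _ (h2.trans h1.symm)
    have hconst := const_of_step _ hstep
    have hPhieq : Phi τ t = Phi τ t' := by
      funext r
      rw [Phi_apply τ hτinv, Phi_apply τ hτinv]
      have c1 : t (r - 1) = t' (r - 1) + (t 0 + t' 0) := z2c _ _ _ (hconst (r - 1))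
      have c2 : t (τ r) = t' (τ r) + (t 0 + t' 0) := z2c _ _ _ (hconst (τ r))
      rw [c1, c2]
      exact z2d _ _ _
    have hx : x = beta ch ((AI f).mulVec δ) := by
      rw [← ht, hPhieq]
      exact key_identity f τ ch hlt hinj hτinv hτ hpt δ
    exact ⟨(AI f).mulVec δ, ⟨δ, rfl⟩, hx.symm⟩
  · rintro x ⟨z, ⟨δ, rfl⟩, rfl⟩
    refine ⟨⟨fun q => ∑ j, δ j * chi f j q, key_identity f τ ch hlt hinj hτinv hτ hpt δ⟩,
      ⟨(AI f).mulVecLin δ, rfl⟩⟩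

include hlt hinj hτinv hτ hch1 hch2 hpt in
lemma range_finrank (hn : 0 < n) :
    Module.finrank (ZMod 2) (LinearMap.range (Phi τ)) = (n - 1) + (AI f).rank := by
  have hsub := LinearMap.finrank_range_add_finrank_ker
    ((psi f).comp (LinearMap.range (Phi τ)).subtype)
  have hrc : LinearMap.range ((psi f).comp (LinearMap.range (Phi τ)).subtype)
      = Submodule.map (psi f) (LinearMap.range (Phi τ)) := by
    rw [LinearMap.range_comp, Submodule.range_subtype]
  have hmapeq : Submodule.map (LinearMap.range (Phi τ)).subtype
      (LinearMap.ker ((psi f).comp (LinearMap.range (Phi τ)).subtype))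
      = LinearMap.range (Phi τ) ⊓ LinearMap.range (beta ch) := by
    rw [LinearMap.ker_comp, Submodule.map_comap_eq, Submodule.range_subtype,
      ker_psi_eq f ch hch1 hch2 hpt]
  have hkc : Module.finrank (ZMod 2)
      (LinearMap.ker ((psi f).comp (LinearMap.range (Phi τ)).subtype))
      = Module.finrank (ZMod 2)
        ((LinearMap.range (Phi τ) ⊓ LinearMap.range (beta ch) :
          Submodule (ZMod 2) (ZMod (2 * n) → ZMod 2))) := by
    rw [← hmapeq]
    exact LinearEquiv.finrank_eq (Submodule.equivMapOfInjective _
      (Submodule.injective_subtype _) _)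
  have hinf : Module.finrank (ZMod 2)
      ((LinearMap.range (Phi τ) ⊓ LinearMap.range (beta ch) :
        Submodule (ZMod 2) (ZMod (2 * n) → ZMod 2))) = (AI f).rank := by
    rw [range_inf_beta f τ ch hlt hinj hτinv hτ hch1 hch2 hpt]
    rw [← LinearEquiv.finrank_eq (Submodule.equivMapOfInjective (beta ch)
      (beta_inj f ch hch1) (LinearMap.range (AI f).mulVecLin))]
    rfl
  rw [hrc, map_psi_range f τ ch hlt hinj hτinv hτ hch1 hch2 hpt hn,
    sumF_ker_finrank hn, hkc, hinf] at hsub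
  omega

end WithHyps

end Diagram

end CDAux

/-- Soboleva / Bar-Natan–Garoufalidis: the number of connected components of
the one-manifold `m(D)` obtained by surgery on the circle along all chords of a
chord diagram `D` equals `corank A(G) + 1`, where `G` is the intersection graph
of `D`.  Components of `m(D)` are orbits of the map `p ↦ τ(p+1)` on the circle
`ZMod (2n)`, where `τ` is the involution exchanging the endpoints of each
chord. -/
theorem components_eq_corank_add_one (n : ℕ) (hn : 0 < n)
    (f : Fin n → ZMod (2 * n) × ZMod (2 * n))
    (hlt : ∀ i, (f i).1.val < (f i).2.val)
    (hinj : Function.Injective (fun p : Fin n × Bool => cond p.2 (f p.1).2 (f p.1).1))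
    (τ : ZMod (2 * n) → ZMod (2 * n)) (hτinv : Function.Involutive τ)
    (hτ : ∀ i, τ (f i).1 = (f i).2) :
    Nat.card (Quot (fun p q : ZMod (2 * n) => τ (p + 1) = q)) =
      corankM (Matrix.of (fun i j : Fin n => if linked f i j then (1 : ZMod 2) else 0)) + 1 := by
  haveI : NeZero (2 * n) := ⟨by omega⟩
  have hgb : Function.Bijective (fun p : Fin n × Bool => cond p.2 (f p.1).2 (f p.1).1) := by
    rw [Fintype.bijective_iff_injective_and_card]
    refine ⟨hinj, ?_⟩
    simp only [Fintype.card_prod, Fintype.card_fin, Fintype.card_bool, ZMod.card]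
    ring
  set e := Equiv.ofBijective _ hgb with he
  set ch : ZMod (2 * n) → Fin n := fun r => (e.symm r).1 with hch
  have hgsymm : ∀ p : Fin n × Bool, e.symm (cond p.2 (f p.1).2 (f p.1).1) = p :=
    fun p => e.symm_apply_apply p
  have hch1 : ∀ i, ch ((f i).1) = i := by
    intro i
    show (e.symm (cond false (f i).2 (f i).1)).1 = i
    rw [hgsymm (i, false)]
  have hch2 : ∀ i, ch ((f i).2) = i := by
    intro i
    show (e.symm (cond true (f i).2 (f i).1)).1 = i
    rw [hgsymm (i, true)]
  have hpt : ∀ r, r = (f (ch r)).1 ∨ r = (f (ch r)).2 := by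
    intro r
    have h1 : (cond (e.symm r).2 (f (e.symm r).1).2 (f (e.symm r).1).1) = r :=
      e.apply_symm_apply r
    cases hb : (e.symm r).2 with
    | false => left; rw [hb] at h1; exact h1.symm
    | true => right; rw [hb] at h1; exact h1.symm
  have hker := CDAux.ker_finrank τ hτinv
  have hrange := CDAux.range_finrank f τ ch hlt hinj hτinv hτ hch1 hch2 hpt hn
  have hrn := LinearMap.finrank_range_add_finrank_ker (CDAux.Phi τ)
  rw [Module.finrank_fintype_fun_eq_card, ZMod.card] at hrn
  have hAle : (CDAux.AI f).rank ≤ n :=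
    le_trans (Matrix.rank_le_card_width _) (le_of_eq (Fintype.card_fin n))
  have hAeq : (Matrix.of (fun i j : Fin n => if linked f i j then (1 : ZMod 2) else 0))
      = CDAux.AI f := rfl
  have hcor : corankM (CDAux.AI f) = Fintype.card (Fin n) - (CDAux.AI f).rank := rfl
  rw [hAeq, hcor, Fintype.card_fin]
  omega
end
end
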